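/- The bosonic entropy function g(x) = (x+1)·log₂(x+1) − x·log₂(x) is subadditive on the nonnegative reals: g(x+y) ≤ g(x) + g(y) for all x, y ≥ 0 (with the convention g(0) = 0). -/

import Mathlib

noncomputable def g (x : ℝ) : ℝ := (x + 1) * Real.logb 2 (x + 1) - x * Real.logb 2 x

theorem g_subadditive : ∀ x y : ℝ, 0 ≤ x → 0 ≤ y → g (x + y) ≤ g x + g y := by
  have g0 : g 0 = 0 := by simp [g]
  intro x y hx hy
  rcases hx.eq_or_lt with rfl | hx
  · simp [g0]
  rcases hy.eq_or_lt with rfl | hy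
  · simp [g0]
  have hb : (1:ℝ) < 2 := one_lt_two
  have hx1 : (0:ℝ) < x + 1 := by linarith
  have hy1 : (0:ℝ) < y + 1 := by linarith
  have hs : (0:ℝ) < x + y := by linarith
  have hs1 : (0:ℝ) < x + y + 1 := by linarith
  have key1 : Real.logb 2 x + Real.logb 2 (x+y+1) ≤ Real.logb 2 (x+1) + Real.logb 2 (x+y) := by
    rw [← Real.logb_mul hx.ne' hs1.ne', ← Real.logb_mul hx1.ne' hs.ne']
    exact (Real.logb_le_logb hb (by positivity) (by nlinarith)).mpr (by nlinarith)
  have key2 : Real.logb 2 y + Real.logb 2 (x+y+1) ≤ Real.logb 2 (y+1) + Real.logb 2 (x+y) := by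
    rw [← Real.logb_mul hy.ne' hs1.ne', ← Real.logb_mul hy1.ne' hs.ne']
    exact (Real.logb_le_logb hb (by positivity) (by nlinarith)).mpr (by nlinarith)
  have key3 : Real.logb 2 (x+y+1) ≤ Real.logb 2 (x+1) + Real.logb 2 (y+1) := by
    rw [← Real.logb_mul hx1.ne' hy1.ne']
    exact (Real.logb_le_logb hb hs1 (by nlinarith)).mpr (by nlinarith)
  have h1 := mul_le_mul_of_nonneg_left key1 hx.le
  have h2 := mul_le_mul_of_nonneg_left key2 hy.le
  simp only [g]
  nlinarith [h1, h2, key3]
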